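/- (Lemma 4) There is a constant C > 0 depending only on α_1,…,α_m, β_1,…,β_m such that for every K > 0 and every sufficiently large n the following holds: if Z_1,…,Z_N are i.i.d. copies of Z with N = ⌊n/log³n⌋, then Pr( ∑_{j=1}^{N} Z_j ≥ (1/log² n) ∑_{i=1}^m β_i log(α_i/β_i) − K ) ≥ 1 − C/(K² log² n). -/

import Mathlib

open MeasureTheory Finset Filter
open scoped Classical ENNReal

/-- Law of `Z`: value `log (p_k/q_k)` with probability `q_k`, `0` otherwise. -/
noncomputable def Zdist {m : ℕ} (p q : Fin m → ℝ) : Measure ℝ :=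
  (1 - ∑ k, ENNReal.ofReal (q k)) • Measure.dirac 0
    + ∑ k, ENNReal.ofReal (q k) • Measure.dirac (Real.log (p k / q k))

lemma Zdist_isProb {m : ℕ} (p q : Fin m → ℝ) (hq : ∀ k, 0 ≤ q k) (hs : ∑ k, q k ≤ 1) :
    IsProbabilityMeasure (Zdist p q) := by
  have hsle : (∑ k, ENNReal.ofReal (q k)) ≤ 1 := by
    rw [← ENNReal.ofReal_sum_of_nonneg (fun k _ => hq k)]
    exact ENNReal.ofReal_le_one.mpr hs
  constructor
  simp only [Zdist, Measure.add_apply, Measure.smul_apply, Measure.finset_sum_apply,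
    measure_univ, smul_eq_mul, mul_one]
  exact tsub_add_cancel_of_le hsle

lemma integrable_smul_dirac {c : ℝ≥0∞} (hc : c ≠ ⊤) (x : ℝ) {φ : ℝ → ℝ} (hφ : Measurable φ) :
    Integrable φ (c • Measure.dirac x) := by
  refine ⟨hφ.aestronglyMeasurable, ?_⟩
  have h : ∫⁻ a, (‖φ a‖₊ : ℝ≥0∞) ∂(c • Measure.dirac x) = c * ‖φ x‖₊ := by
    rw [lintegral_smul_measure, lintegral_dirac, smul_eq_mul]
  unfold HasFiniteIntegral
  rw [show (∫⁻ a, ‖φ a‖ₑ ∂(c • Measure.dirac x)) = c * ‖φ x‖₊ from h]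
  exact ENNReal.mul_lt_top hc.lt_top ENNReal.coe_lt_top

lemma Zdist_integrable {m : ℕ} (p q : Fin m → ℝ) {φ : ℝ → ℝ} (hφ : Measurable φ) :
    Integrable φ (Zdist p q) := by
  rw [Zdist, integrable_add_measure]
  refine ⟨integrable_smul_dirac (ne_top_of_le_ne_top ENNReal.one_ne_top tsub_le_self) _ hφ, ?_⟩
  rw [integrable_finset_sum_measure]
  exact fun k _ => integrable_smul_dirac ENNReal.ofReal_ne_top _ hφ

lemma Zdist_integral {m : ℕ} (p q : Fin m → ℝ) (hq : ∀ k, 0 ≤ q k) (hs : ∑ k, q k ≤ 1)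
    {φ : ℝ → ℝ} (hφ : Measurable φ) :
    ∫ x, φ x ∂(Zdist p q)
      = (1 - ∑ k, q k) * φ 0 + ∑ k, q k * φ (Real.log (p k / q k)) := by
  have h1 : Integrable φ ((1 - ∑ k, ENNReal.ofReal (q k)) • Measure.dirac (0:ℝ)) :=
    integrable_smul_dirac (ne_top_of_le_ne_top ENNReal.one_ne_top tsub_le_self) _ hφ
  have h2 : ∀ k ∈ Finset.univ (α := Fin m),
      Integrable φ (ENNReal.ofReal (q k) • Measure.dirac (Real.log (p k / q k))) :=
    fun k _ => integrable_smul_dirac ENNReal.ofReal_ne_top _ hφ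
  rw [Zdist, integral_add_measure h1 (integrable_finset_sum_measure.mpr h2),
    integral_finset_sum_measure h2, integral_smul_measure, integral_dirac]
  simp_rw [integral_smul_measure, integral_dirac]
  have hnn : 0 ≤ ∑ k, q k := Finset.sum_nonneg fun k _ => hq k
  congr 1
  · rw [← ENNReal.ofReal_sum_of_nonneg (fun k _ => hq k), ← ENNReal.ofReal_one,
      ← ENNReal.ofReal_sub _ hnn, ENNReal.toReal_ofReal (by linarith), smul_eq_mul]

  · exact Finset.sum_congr rfl fun k _ => by
      rw [ENNReal.toReal_ofReal (hq k), smul_eq_mul]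

set_option maxHeartbeats 1000000 in
theorem lemma4 (m : ℕ) (hm : 0 < m) (α β : Fin m → ℝ)
    (hα : ∀ i, 0 < α i) (hβ : ∀ i, 0 < β i) (hne : ∃ i, α i ≠ β i) :
    ∃ C : ℝ, 0 < C ∧ ∀ K : ℝ, 0 < K → ∃ N₀ : ℕ, ∀ n : ℕ, N₀ ≤ n →
      1 - ENNReal.ofReal (C / (K ^ 2 * (Real.log n) ^ 2)) ≤
      Measure.pi (fun _ : Fin (Nat.floor ((n : ℝ) / (Real.log n) ^ 3)) =>
          Zdist (fun i => α i * Real.log n / n) (fun i => β i * Real.log n / n))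
        {f | (1 / (Real.log n) ^ 2) * ∑ i, β i * Real.log (α i / β i) - K ≤ ∑ j, f j} := by
  classical
  set T : ℝ := ∑ i, β i * Real.log (α i / β i) with hTdef
  set V : ℝ := ∑ i, β i * (Real.log (α i / β i)) ^ 2 with hVdef
  have hV0 : 0 < V := by
    obtain ⟨i0, hi0⟩ := hne
    refine Finset.sum_pos' (fun i _ => mul_nonneg (hβ i).le (sq_nonneg _)) ⟨i0, Finset.mem_univ _, ?_⟩
    have hlog0 : Real.log (α i0 / β i0) ≠ 0 := by
      intro h
      rcases (Real.log_eq_zero).mp h with h' | h' | h'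
      · exact absurd h' (div_pos (hα i0) (hβ i0)).ne'
      · exact hi0 ((div_eq_one_iff_eq (hβ i0).ne').mp h')
      · nlinarith [div_pos (hα i0) (hβ i0)]
    exact mul_pos (hβ i0) (pow_two_pos_of_ne_zero hlog0)
  refine ⟨4 * V, by linarith, ?_⟩
  intro K hK
  have hβsum : 0 < ∑ i, β i := Finset.sum_pos (fun i _ => hβ i) ⟨⟨0, hm⟩, Finset.mem_univ _⟩
  set ε : ℝ := min (K / (2 * (|T| + 1))) (1 / ((∑ i, β i) + 1)) with hεdef
  have hε0 : 0 < ε := lt_min (by positivity) (by positivity)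
  have hev : ∀ᶠ n : ℕ in atTop, Real.log n / n < ε ∧ 1 ≤ Real.log n := by
    have h1 : Tendsto (fun n : ℕ => Real.log n / n) atTop (nhds 0) := by
      have := Real.isLittleO_log_id_atTop.tendsto_div_nhds_zero.comp
        tendsto_natCast_atTop_atTop (α := ℕ)
      simpa [Function.comp_def] using this
    have h2 := h1.eventually_lt_const hε0
    have h3 : ∀ᶠ n : ℕ in atTop, 1 ≤ Real.log n := by
      have := (Real.tendsto_log_atTop.comp tendsto_natCast_atTop_atTop (α := ℕ)).eventually_ge_atTop 1
      simpa [Function.comp] using this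
    exact h2.and h3
  obtain ⟨N₀, hN₀⟩ := eventually_atTop.mp hev
  refine ⟨N₀, fun n hn => ?_⟩
  obtain ⟨hεn, hlog1⟩ := hN₀ n hn
  set L : ℝ := Real.log n with hLdef
  have hL0 : 0 < L := by linarith
  have hn0 : (0 : ℝ) < n := by
    rcases Nat.eq_zero_or_pos n with h | h
    · exfalso; rw [hLdef, h] at hlog1; simp at hlog1; linarith
    · exact_mod_cast h
  set N : ℕ := Nat.floor ((n : ℝ) / L ^ 3) with hNdef
  set q : Fin m → ℝ := fun i => β i * L / n with hqdef
  set pp : Fin m → ℝ := fun i => α i * L / n with hppdef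
  have hq0 : ∀ k, 0 ≤ q k := by
    intro k
    simp only [hqdef]
    exact div_nonneg (mul_nonneg (hβ k).le hL0.le) hn0.le
  have hLn0 : 0 ≤ L / n := by positivity
  have hsum_q : ∑ k, q k = (∑ i, β i) * (L / n) := by
    simp only [hqdef, mul_div_assoc]; rw [← Finset.sum_mul]
  have hsq1 : ∑ k, q k ≤ 1 := by
    rw [hsum_q]
    have h2 : L / n ≤ 1 / ((∑ i, β i) + 1) := (lt_of_lt_of_le hεn (min_le_right _ _)).le
    calc (∑ i, β i) * (L / n) ≤ (∑ i, β i) * (1 / ((∑ i, β i) + 1)) :=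
          mul_le_mul_of_nonneg_left h2 hβsum.le
      _ ≤ 1 := by rw [mul_one_div, div_le_one (by linarith)]; linarith
  have hlog_pq : ∀ k, Real.log (pp k / q k) = Real.log (α k / β k) := by
    intro k
    have : pp k / q k = α k / β k := by
      simp only [hppdef, hqdef]
      rw [div_div_div_cancel_right₀ (hc := hn0.ne'), mul_div_mul_right _ _ hL0.ne']
    rw [this]
  -- the measure
  set μ : Measure ℝ := Zdist pp q with hμdef
  haveI hprob : IsProbabilityMeasure μ := Zdist_isProb pp q hq0 hsq1
  haveI hsf : SigmaFinite μ := inferInstance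
  haveI : ∀ i : Fin N, IsProbabilityMeasure ((fun _ : Fin N => μ) i) := fun _ => hprob
  set P : Measure (Fin N → ℝ) := Measure.pi (fun _ : Fin N => μ) with hPdef
  haveI hPprob : IsProbabilityMeasure P := by rw [hPdef]; infer_instance
  -- the mean of one step
  set mb : ℝ := ∑ k, q k * Real.log (α k / β k) with hmbdef
  have hmbT : mb = (L / n) * T := by
    rw [hmbdef, hTdef, Finset.mul_sum]
    exact Finset.sum_congr rfl fun k _ => by simp only [hqdef]; ring
  have hq2V : ∑ k, q k * (Real.log (α k / β k)) ^ 2 = (L / n) * V := by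
    rw [hVdef, Finset.mul_sum]
    exact Finset.sum_congr rfl fun k _ => by simp only [hqdef]; ring
  -- integrals over μ
  have hIg : ∫ x, (x - mb) ∂μ = 0 := by
    rw [hμdef, Zdist_integral pp q hq0 hsq1 (show Measurable (fun x : ℝ => x - mb) from measurable_id.sub measurable_const)]
    simp_rw [hlog_pq]
    have hsplit : ∑ k, q k * (Real.log (α k / β k) - mb) = mb - (∑ k, q k) * mb := by
      simp only [mul_sub]
      rw [Finset.sum_sub_distrib, ← Finset.sum_mul, ← hmbdef]
    rw [hsplit]; ring
  set σ2 : ℝ := ∫ x, (x - mb) * (x - mb) ∂μ with hσdef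
  have hσ0 : 0 ≤ σ2 := by
    rw [hσdef]; exact integral_nonneg fun x => mul_self_nonneg _
  have hσle : σ2 ≤ (L / n) * V := by
    rw [hσdef, hμdef, Zdist_integral pp q hq0 hsq1
      (show Measurable (fun x : ℝ => (x - mb) * (x - mb)) from (measurable_id.sub measurable_const).mul (measurable_id.sub measurable_const))]
    simp_rw [hlog_pq]
    have hexp : ∑ k, q k * ((Real.log (α k / β k) - mb) * (Real.log (α k / β k) - mb))
        = (∑ k, q k * (Real.log (α k / β k)) ^ 2) - 2 * mb * (∑ k, q k * Real.log (α k / β k))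
          + mb ^ 2 * (∑ k, q k) := by
      have hpt : ∀ k : Fin m, q k * ((Real.log (α k / β k) - mb) * (Real.log (α k / β k) - mb))
          = q k * (Real.log (α k / β k)) ^ 2 - 2 * mb * (q k * Real.log (α k / β k))
            + mb ^ 2 * q k := fun k => by ring
      rw [Finset.sum_congr rfl fun k _ => hpt k, Finset.sum_add_distrib, Finset.sum_sub_distrib,
        ← Finset.mul_sum, ← Finset.mul_sum]
    rw [hexp, ← hmbdef, hq2V]
    have hsq0 : 0 ≤ ∑ k, q k := Finset.sum_nonneg fun k _ => hq0 k
    nlinarith [sq_nonneg mb]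
  have hIconst : ∫ x, (1 : ℝ) ∂μ = 1 := by simp
  -- coordinate product functions
  set h : Fin N → Fin N → Fin N → ℝ → ℝ :=
    fun j k i x => (if i = j then x - mb else 1) * (if i = k then x - mb else 1) with hhdef
  have hmeas1 : ∀ (i j' : Fin N), Measurable (fun x : ℝ => if i = j' then x - mb else (1:ℝ)) := by
    intro i j'
    by_cases hi : i = j'
    · simp only [hi, if_pos rfl]; exact measurable_id.sub measurable_const
    · simp only [if_neg hi]; exact measurable_const
  have hmeas : ∀ j k i, Measurable (h j k i) := by
    intro j k i; simp only [hhdef]; exact (hmeas1 i j).mul (hmeas1 i k)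
  have hIntμ : ∀ j k i, Integrable (h j k i) μ := fun j k i =>
    hμdef ▸ Zdist_integrable pp q (hmeas j k i)
  have hIntP : ∀ j k, Integrable (fun f => ∏ i, h j k i (f i)) P := fun j k =>
    Integrable.fintype_prod (f := h j k) (μ := fun _ => μ) (fun i => hIntμ j k i)
  have key : ∀ j k : Fin N, (∫ f, ∏ i, h j k i (f i) ∂P) = if j = k then σ2 else 0 := by
    intro j k
    have hfub : (∫ f, ∏ i, h j k i (f i) ∂P) = ∏ i, ∫ x, h j k i x ∂μ :=
      integral_fintype_prod_eq_prod (E := fun _ => ℝ) (h j k) (μ := fun _ => μ)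
    rw [hfub]
    by_cases hjk : j = k
    · subst hjk
      rw [if_pos rfl]
      rw [Finset.prod_eq_single j (fun b _ hbj => ?_) (fun hj => absurd (Finset.mem_univ j) hj)]
      · simp only [hhdef, if_pos rfl]
        exact hσdef.symm
      · simp only [hhdef, if_neg hbj, one_mul]
        simpa using hIconst
    · rw [if_neg hjk]
      refine Finset.prod_eq_zero (Finset.mem_univ j) ?_
      simp only [hhdef, if_pos rfl, if_neg hjk, mul_one]
      exact hIg
  -- the sum and its square
  set MM : ℝ := (N : ℝ) * mb with hMMdef
  have hWeq : ∀ f : Fin N → ℝ,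
      ((∑ j, f j) - MM) * ((∑ j, f j) - MM) = ∑ j, ∑ k, ∏ i, h j k i (f i) := by
    intro f
    have h1 : (∑ j, f j) - MM = ∑ j : Fin N, (f j - mb) := by
      rw [Finset.sum_sub_distrib, Finset.sum_const, Finset.card_univ, Fintype.card_fin,
        nsmul_eq_mul, hMMdef]
    have h2 : ∀ j k : Fin N, (f j - mb) * (f k - mb) = ∏ i, h j k i (f i) := by
      intro j k
      simp only [hhdef]
      rw [Finset.prod_mul_distrib, Finset.prod_ite_eq', Finset.prod_ite_eq']
      simp
    rw [h1, Finset.sum_mul_sum]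
    exact Finset.sum_congr rfl fun j _ => Finset.sum_congr rfl fun k _ => h2 j k
  have hIntW : Integrable (fun f : Fin N → ℝ => ((∑ j, f j) - MM) * ((∑ j, f j) - MM)) P := by
    have heq : (fun f : Fin N → ℝ => ((∑ j, f j) - MM) * ((∑ j, f j) - MM))
        = fun f => ∑ j, ∑ k, ∏ i, h j k i (f i) := funext hWeq
    rw [heq]
    exact integrable_finset_sum _ fun j _ => integrable_finset_sum _ fun k _ => hIntP j k
  have hIW : (∫ f, ((∑ j, f j) - MM) * ((∑ j, f j) - MM) ∂P) = (N : ℝ) * σ2 := by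
    calc (∫ f, ((∑ j, f j) - MM) * ((∑ j, f j) - MM) ∂P)
        = ∫ f, ∑ j, ∑ k, ∏ i, h j k i (f i) ∂P := by simp_rw [hWeq]
      _ = ∑ j, ∑ k, ∫ f, ∏ i, h j k i (f i) ∂P := by
          rw [integral_finset_sum _ fun j _ =>
            integrable_finset_sum _ fun k _ => hIntP j k]
          exact Finset.sum_congr rfl fun j _ => integral_finset_sum _ fun k _ => hIntP j k
      _ = ∑ j : Fin N, ∑ k : Fin N, if j = k then σ2 else 0 := by
          exact Finset.sum_congr rfl fun j _ => Finset.sum_congr rfl fun k _ => key j k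
      _ = (N : ℝ) * σ2 := by
          simp [Finset.sum_ite_eq, Finset.card_univ, mul_comm]
  -- floor bounds
  have hNle : (N : ℝ) ≤ (n : ℝ) / L ^ 3 := by
    rw [hNdef]; exact Nat.floor_le (by positivity)
  have hNge : (n : ℝ) / L ^ 3 - (N : ℝ) ≤ 1 := by
    rw [hNdef]
    have := Nat.lt_floor_add_one ((n : ℝ) / L ^ 3)
    push_cast at this ⊢
    linarith
  have hTK : |T| * (L / n) ≤ K / 2 := by
    have h2 : L / n ≤ K / (2 * (|T| + 1)) := (lt_of_lt_of_le hεn (min_le_left _ _)).le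
    have h3 : |T| * (L / n) ≤ |T| * (K / (2 * (|T| + 1))) :=
      mul_le_mul_of_nonneg_left h2 (abs_nonneg T)
    have habs : 0 ≤ |T| := abs_nonneg T
    have h4 : |T| * (K / (2 * (|T| + 1))) ≤ K / 2 := by
      rw [← mul_div_assoc, div_le_div_iff₀ (by positivity) (by norm_num : (0:ℝ) < 2)]
      nlinarith
    linarith
  have hMT : |1 / L ^ 2 * T - MM| ≤ K / 2 := by
    have hdiff : 1 / L ^ 2 * T - MM = T * (L / n) * ((n : ℝ) / L ^ 3 - N) := by
      rw [hMMdef, hmbT]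
      field_simp
    rw [hdiff, abs_mul]
    have h5 : |(n : ℝ) / L ^ 3 - N| ≤ 1 := by
      rw [abs_le]
      constructor
      · linarith
      · exact hNge
    have h6 : |T * (L / n)| = |T| * (L / n) := by rw [abs_mul, abs_of_nonneg hLn0]
    calc |T * (L / n)| * |(n : ℝ) / L ^ 3 - N| ≤ |T * (L / n)| * 1 :=
          mul_le_mul_of_nonneg_left h5 (abs_nonneg _)
      _ = |T| * (L / n) := by rw [mul_one, h6]
      _ ≤ K / 2 := hTK
  have hSmeas : Measurable (fun f : Fin N → ℝ => ∑ j, f j) :=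
    Finset.univ.measurable_sum fun j _ => measurable_pi_apply j
  have hWmeas : Measurable (fun f : Fin N → ℝ => ((∑ j, f j) - MM) * ((∑ j, f j) - MM)) :=
    (hSmeas.sub measurable_const).mul (hSmeas.sub measurable_const)
  have hWm' : Measurable (fun f : Fin N → ℝ =>
      ENNReal.ofReal (((∑ j, f j) - MM) * ((∑ j, f j) - MM))) :=
    ENNReal.measurable_ofReal.comp hWmeas
  set Bad : Set (Fin N → ℝ) := {f | ENNReal.ofReal ((K / 2) ^ 2) ≤
      ENNReal.ofReal (((∑ j, f j) - MM) * ((∑ j, f j) - MM))} with hBaddef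
  have hKne0 : ENNReal.ofReal ((K / 2) ^ 2) ≠ 0 := (ENNReal.ofReal_pos.mpr (by positivity)).ne'
  have hmark : P Bad ≤ ENNReal.ofReal ((N : ℝ) * σ2) / ENNReal.ofReal ((K / 2) ^ 2) := by
    have h1 := mul_meas_ge_le_lintegral₀ (μ := P) hWm'.aemeasurable (ENNReal.ofReal ((K / 2) ^ 2))
    have h2 : (∫⁻ f, ENNReal.ofReal (((∑ j, f j) - MM) * ((∑ j, f j) - MM)) ∂P)
        = ENNReal.ofReal ((N : ℝ) * σ2) := by
      rw [← hIW]
      exact (ofReal_integral_eq_lintegral_ofReal hIntW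
        (ae_of_all _ fun f => mul_self_nonneg _)).symm
    rw [ENNReal.le_div_iff_mul_le (Or.inl hKne0) (Or.inl ENNReal.ofReal_ne_top)]
    rw [mul_comm] at h1
    exact h2 ▸ h1
  have hnum : (N : ℝ) * σ2 / ((K / 2) ^ 2) ≤ 4 * V / (K ^ 2 * L ^ 2) := by
    have h1 : (N : ℝ) * σ2 ≤ V / L ^ 2 := by
      calc (N : ℝ) * σ2 ≤ ((n : ℝ) / L ^ 3) * σ2 := mul_le_mul_of_nonneg_right hNle hσ0
        _ ≤ ((n : ℝ) / L ^ 3) * ((L / n) * V) := mul_le_mul_of_nonneg_left hσle (by positivity)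
        _ = V / L ^ 2 := by field_simp
    calc (N : ℝ) * σ2 / ((K / 2) ^ 2) ≤ (V / L ^ 2) / ((K / 2) ^ 2) := by gcongr
      _ = 4 * V / (K ^ 2 * L ^ 2) := by field_simp; ring
  have hdivEq : ENNReal.ofReal ((N : ℝ) * σ2) / ENNReal.ofReal ((K / 2) ^ 2)
      = ENNReal.ofReal ((N : ℝ) * σ2 / ((K / 2) ^ 2)) :=
    (ENNReal.ofReal_div_of_pos (by positivity)).symm
  set E : Set (Fin N → ℝ) := {f | 1 / L ^ 2 * T - K ≤ ∑ j, f j} with hEdef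
  have hEmeas : MeasurableSet E := measurableSet_le measurable_const hSmeas
  have hsubset : Eᶜ ⊆ Bad := by
    intro f hf
    simp only [hEdef, Set.mem_compl_iff, Set.mem_setOf_eq, not_le] at hf
    simp only [hBaddef, Set.mem_setOf_eq]
    apply ENNReal.ofReal_le_ofReal
    have habs := abs_le.mp hMT
    nlinarith [sq_nonneg ((∑ j, f j) - MM + K / 2), habs.1, habs.2, hf, hK]
  have hPbad : P Eᶜ ≤ ENNReal.ofReal (4 * V / (K ^ 2 * L ^ 2)) := by
    calc P Eᶜ ≤ P Bad := measure_mono hsubset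
      _ ≤ ENNReal.ofReal ((N : ℝ) * σ2) / ENNReal.ofReal ((K / 2) ^ 2) := hmark
      _ = ENNReal.ofReal ((N : ℝ) * σ2 / ((K / 2) ^ 2)) := hdivEq
      _ ≤ ENNReal.ofReal (4 * V / (K ^ 2 * L ^ 2)) := ENNReal.ofReal_le_ofReal hnum
  have hPE : P E = 1 - P Eᶜ := by
    rw [prob_compl_eq_one_sub hEmeas, ENNReal.sub_sub_cancel ENNReal.one_ne_top prob_le_one]
  show 1 - ENNReal.ofReal (4 * V / (K ^ 2 * L ^ 2)) ≤ P E
  rw [hPE]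
  exact tsub_le_tsub_left hPbad 1
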